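/- For every positive integer n, the partition function satisfies Euler's recurrence: p(n) = \sum_{k \geq 1} (-1)^{k+1} \left( p\left(n - \frac{k(3k-1)}{2}\right) + p\left(n - \frac{k(3k+1)}{2}\right) \right), where p(t) is taken to be 0 whenever t < 0 (so the sum has only finitely many nonzero terms). -/

import Mathlib

/-- `p(t)` for an integer argument: the number of partitions of `t` when `t ≥ 0`,
and `0` when `t < 0`. -/
def partitionCount (t : ℤ) : ℤ :=
  if 0 ≤ t then (Fintype.card (Nat.Partition t.toNat) : ℤ) else 0

open Multiset

def pent (j : ℤ) : ℤ := j * (3 * j + 1) / 2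

lemma two_mul_pent (j : ℤ) : 2 * pent j = j * (3 * j + 1) := by
  have h : (2:ℤ) ∣ j * (3 * j + 1) := by
    rcases Int.even_or_odd j with ⟨k, hk⟩ | ⟨k, hk⟩
    · exact ⟨k * (3*j+1), by rw [hk]; ring⟩
    · exact ⟨j * (3*k+2), by rw [hk]; ring⟩
  exact Int.mul_ediv_cancel' h

lemma pent_succ (j : ℤ) : pent (j + 1) = pent j + 3 * j + 2 := by
  have h1 := two_mul_pent j
  have h2 := two_mul_pent (j + 1)
  have h3 : (j+1) * (3 * (j+1) + 1) = j * (3*j+1) + 6*j + 4 := by ring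
  linarith

lemma pent_pred (j : ℤ) : pent (j - 1) = pent j - 3 * j + 1 := by
  have := pent_succ (j - 1); simp at this; linarith

lemma pent_zero : pent 0 = 0 := rfl

lemma msup_mem {M : Multiset ℕ} (h : M ≠ 0) : M.sup ∈ M := by
  induction M using Multiset.induction_on with
  | empty => simp at h
  | cons a s ih =>
    rw [Multiset.sup_cons]
    rcases eq_or_ne s 0 with rfl | hs
    · simp
    · rcases le_total a s.sup with h1 | h1
      · rw [sup_eq_right.2 h1]; exact Multiset.mem_cons_of_mem (ih hs)
      · rw [sup_eq_left.2 h1]; exact Multiset.mem_cons_self a s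

lemma sum_filter_ne_zero (M : Multiset ℕ) : (M.filter (fun x => x ≠ 0)).sum = M.sum := by
  conv_rhs => rw [← Multiset.filter_add_not (fun x => x ≠ 0) M]
  rw [Multiset.sum_add]
  have : (M.filter (fun x => ¬ x ≠ 0)).sum = 0 :=
    Multiset.sum_eq_zero (fun x hx => by simpa using (Multiset.of_mem_filter hx))
  omega

lemma card_le_sum {M : Multiset ℕ} (h : ∀ x ∈ M, x ≠ 0) : M.card ≤ M.sum := by
  induction M using Multiset.induction_on with
  | empty => simp
  | cons a s ih =>
    have := h a (Multiset.mem_cons_self a s)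
    have := ih (fun x hx => h x (Multiset.mem_cons_of_mem hx))
    simp only [Multiset.sum_cons, Multiset.card_cons]; omega

lemma sum_map_sub_one {M : Multiset ℕ} (h : ∀ x ∈ M, x ≠ 0) :
    (M.map (fun x => x - 1)).sum = M.sum - M.card := by
  induction M using Multiset.induction_on with
  | empty => simp
  | cons a s ih =>
    have ha := h a (Multiset.mem_cons_self a s)
    have hs := ih (fun x hx => h x (Multiset.mem_cons_of_mem hx))
    have hc := card_le_sum (fun x hx => h x (Multiset.mem_cons_of_mem hx))
    simp only [Multiset.map_cons, Multiset.sum_cons, Multiset.card_cons]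
    omega

lemma sum_map_add_one (M : Multiset ℕ) :
    (M.map (fun x => x + 1)).sum = M.sum + M.card := by
  induction M using Multiset.induction_on with
  | empty => simp
  | cons a s ih => simp only [Multiset.map_cons, Multiset.sum_cons, Multiset.card_cons]; omega

lemma msup_eq {M : Multiset ℕ} {a : ℕ} (ha : a ∈ M) (hle : ∀ x ∈ M, x ≤ a) : M.sup = a :=
  le_antisymm (Multiset.sup_le.2 hle) (Multiset.le_sup ha)

/-- The Bressoud–Zeilberger involution. -/
def bz : ℤ × Multiset ℕ → ℤ × Multiset ℕ := fun p =>
  if (p.2.sup : ℤ) ≤ (p.2.card : ℤ) + 3 * p.1 then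
    (p.1 - 1,
      ((((p.2.card : ℤ) + 3 * p.1 - 1).toNat ::ₘ p.2.map (fun x => x - 1)).filter (fun x => x ≠ 0)))
  else
    (p.1 + 1, (p.2.erase p.2.sup).map (fun x => x + 1) +
      Multiset.replicate
        (((p.2.sum : ℤ) - 3 * p.1 - 2 - (((((p.2.erase p.2.sup).map (fun x => x + 1)).sum : ℕ)) : ℤ)).toNat) 1)

def good (n : ℤ) (p : ℤ × Multiset ℕ) : Prop :=
  (∀ x ∈ p.2, x ≠ 0) ∧ (p.2.sum : ℤ) + pent p.1 = n

section core
variable {n j : ℤ} {M : Multiset ℕ}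

lemma case1_pos (hn : 1 ≤ n) (h0 : ∀ x ∈ M, x ≠ 0) (hsum : (M.sum : ℤ) + pent j = n)
    (hC : (M.sup : ℤ) ≤ (M.card : ℤ) + 3 * j) : 1 ≤ (M.card : ℤ) + 3 * j := by
  rcases eq_or_ne M 0 with rfl | hM
  · simp only [Multiset.sup_zero, Multiset.card_zero, bot_eq_zero] at hC ⊢
    have h2 : pent j = n := by
      simpa using hsum
    have hj : j ≠ 0 := by rintro rfl; rw [pent_zero] at h2; omega
    have hj0 : 0 ≤ j := by
      push_cast at hC; omega
    have : 1 ≤ j := by omega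
    omega
  · have h1 : M.sup ∈ M := msup_mem hM
    have h2 : M.sup ≠ 0 := h0 _ h1
    have : 1 ≤ (M.sup : ℤ) := by exact_mod_cast Nat.one_le_iff_ne_zero.2 h2
    omega

lemma bz_case1 (hC : (M.sup : ℤ) ≤ (M.card : ℤ) + 3 * j) :
    bz (j, M) = (j - 1,
      ((((M.card : ℤ) + 3 * j - 1).toNat ::ₘ M.map (fun x => x - 1)).filter (fun x => x ≠ 0))) := by
  simp only [bz, if_pos hC]

lemma bz_case2 (hC : ¬ (M.sup : ℤ) ≤ (M.card : ℤ) + 3 * j) :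
    bz (j, M) = (j + 1, (M.erase M.sup).map (fun x => x + 1) +
      Multiset.replicate
        (((M.sum : ℤ) - 3 * j - 2 - (((((M.erase M.sup).map (fun x => x + 1)).sum : ℕ)) : ℤ)).toNat) 1) := by
  simp only [bz, if_neg hC]

lemma sum_case1 (h0 : ∀ x ∈ M, x ≠ 0) (hsum : (M.sum : ℤ) + pent j = n) (hb : 1 ≤ (M.card : ℤ) + 3 * j) :
    ((((((M.card : ℤ) + 3 * j - 1).toNat ::ₘ M.map (fun x => x - 1)).filter
      (fun x => x ≠ 0)).sum : ℤ)) = (M.sum : ℤ) + 3 * j - 1 := by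
  rw [sum_filter_ne_zero]
  rw [Multiset.sum_cons]
  have h1 := sum_map_sub_one h0
  have h2 := card_le_sum h0
  have h3 : ((((M.card : ℤ) + 3 * j - 1).toNat : ℤ)) = (M.card : ℤ) + 3 * j - 1 :=
    Int.toNat_of_nonneg (by omega)
  omega

end core

section core2
variable {n j : ℤ} {M : Multiset ℕ}

lemma good_iff {n j : ℤ} {M : Multiset ℕ} :
    good n (j, M) ↔ ((∀ x ∈ M, x ≠ 0) ∧ (M.sum : ℤ) + pent j = n) := Iff.rfl

lemma bz_good (hn : 1 ≤ n) (h0 : ∀ x ∈ M, x ≠ 0) (hsum : (M.sum : ℤ) + pent j = n) :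
    good n (bz (j, M)) := by
  by_cases hC : (M.sup : ℤ) ≤ (M.card : ℤ) + 3 * j
  · rw [bz_case1 hC, good_iff]
    have hb := case1_pos hn h0 hsum hC
    refine ⟨fun x hx => by simpa using (Multiset.mem_filter.1 hx).2, ?_⟩
    have hS := sum_case1 (n := n) h0 hsum hb
    have hp := pent_pred j
    omega
  · rw [bz_case2 hC, good_iff]
    constructor
    · intro x hx
      rcases Multiset.mem_add.1 hx with hx | hx
      · obtain ⟨y, _, rfl⟩ := Multiset.mem_map.1 hx; omega
      · have := Multiset.eq_of_mem_replicate hx; omega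
    · have hp := pent_succ j
      rw [Multiset.sum_add, Multiset.sum_replicate, smul_eq_mul, mul_one]
      rcases eq_or_ne M 0 with rfl | hM
      · simp only [Multiset.sup_zero, Multiset.card_zero, Multiset.sum_zero,
          Multiset.erase_zero, Multiset.map_zero, Nat.bot_eq_zero] at hC hsum ⊢
        simp only [Nat.cast_zero] at hC ⊢
        omega
      · have ha := msup_mem hM
        have ha0 := h0 _ ha
        have hcpos : 0 < M.card := Multiset.card_pos.2 hM
        have e1 := Multiset.sum_erase ha
        have e2 := Multiset.card_erase_of_mem ha
        rw [Nat.pred_eq_sub_one] at e2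
        have e3 := sum_map_add_one (M.erase M.sup)
        omega

lemma bz_invol (hn : 1 ≤ n) (h0 : ∀ x ∈ M, x ≠ 0) (hsum : (M.sum : ℤ) + pent j = n) :
    bz (bz (j, M)) = (j, M) := by
  by_cases hC : (M.sup : ℤ) ≤ (M.card : ℤ) + 3 * j
  · have hb := case1_pos hn h0 hsum hC
    rw [bz_case1 hC]
    rcases eq_or_ne ((M.card : ℤ) + 3 * j) 1 with hb1 | hb1
    · -- b = 0, all parts equal 1
      have hM1 : ∀ x ∈ M, x = 1 := by
        intro x hx
        have h1 := Multiset.le_sup hx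
        have h2 := h0 x hx
        omega
      have hMrep : M = Multiset.replicate M.card 1 := Multiset.eq_replicate_card.2 hM1
      have hcard1 : 1 ≤ M.card := by
        by_contra h
        have : M = 0 := by
          rw [← Multiset.card_eq_zero]; omega
        subst this
        simp only [Multiset.card_zero] at hb1
        omega
      have hM'0 : ((((M.card : ℤ) + 3 * j - 1).toNat ::ₘ M.map (fun x => x - 1)).filter
          (fun x => x ≠ 0)) = 0 := by
        rw [Multiset.filter_eq_nil]
        intro x hx
        rcases Multiset.mem_cons.1 hx with rfl | hx
        · simp; omega
        · obtain ⟨y, hy, rfl⟩ := Multiset.mem_map.1 hx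
          simp [hM1 y hy]
      rw [hM'0]
      have hC' : ¬ (((0 : Multiset ℕ).sup : ℤ) ≤ (Multiset.card (0 : Multiset ℕ) : ℤ) + 3 * (j-1)) := by
        simp only [Multiset.sup_zero, Multiset.card_zero, bot_eq_zero]
        push_cast
        omega
      rw [bz_case2 hC']
      simp only [Multiset.erase_zero, Multiset.map_zero, Multiset.sum_zero, zero_add,
        Nat.cast_zero]
      refine Prod.ext (by omega) ?_
      simp only
      rw [hMrep]
      congr 1
      omega
    · -- b ≥ 1
      have hb2 : 2 ≤ (M.card : ℤ) + 3 * j := by omega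
      set bN := ((M.card : ℤ) + 3 * j - 1).toNat with hbNdef
      have hbN : (bN : ℤ) = (M.card : ℤ) + 3 * j - 1 := Int.toNat_of_nonneg (by omega)
      have hbN0 : bN ≠ 0 := by omega
      set F := (M.map (fun x => x - 1)).filter (fun x => x ≠ 0) with hFdef
      have hM' : ((bN ::ₘ M.map (fun x => x - 1)).filter (fun x => x ≠ 0)) = bN ::ₘ F := by
        rw [Multiset.filter_cons_of_pos (p := fun x => x ≠ 0) _ hbN0]
      rw [hM']
      have hFle : ∀ x ∈ F, x ≤ bN := by
        intro x hx
        obtain ⟨y, hy, rfl⟩ := Multiset.mem_map.1 (Multiset.mem_of_mem_filter hx)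
        have := Multiset.le_sup hy
        omega
      have hsup : (bN ::ₘ F).sup = bN :=
        msup_eq (Multiset.mem_cons_self _ _) (by
          intro x hx
          rcases Multiset.mem_cons.1 hx with rfl | hx
          · exact le_rfl
          · exact hFle x hx)
      have hFcard : F.card ≤ M.card := by
        calc F.card ≤ (M.map (fun x => x - 1)).card := Multiset.card_le_card (Multiset.filter_le _ _)
        _ = M.card := Multiset.card_map _ _
      have hC' : ¬ (((bN ::ₘ F).sup : ℤ) ≤ ((bN ::ₘ F).card : ℤ) + 3 * (j - 1)) := by
        rw [hsup, Multiset.card_cons]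
        push_cast
        omega
      rw [bz_case2 hC']
      rw [hsup, Multiset.erase_cons_head]
      set G := M.filter (fun x => x - 1 ≠ 0) with hGdef
      have hFG : F = G.map (fun x => x - 1) := by
        rw [hFdef, Multiset.filter_map, hGdef]
        rfl
      have hrest : F.map (fun x => x + 1) = G := by
        rw [hFG, Multiset.map_map]
        have : ∀ x ∈ G, ((fun x => x + 1) ∘ (fun x => x - 1)) x = id x := by
          intro x hx
          have hxM : x ∈ M := Multiset.mem_of_mem_filter hx
          have := h0 x hxM
          simp only [Function.comp, id]
          omega
        rw [Multiset.map_congr rfl this, Multiset.map_id]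
      set H := M.filter (fun x => ¬ x - 1 ≠ 0) with hHdef
      have hGH : G + H = M := Multiset.filter_add_not _ M
      have hH1 : ∀ x ∈ H, x = 1 := by
        intro x hx
        have h1 := Multiset.of_mem_filter hx
        have h2 := h0 x (Multiset.mem_of_mem_filter hx)
        simp at h1
        omega
      have hHrep : H = Multiset.replicate H.card 1 := Multiset.eq_replicate_card.2 hH1
      have hHsum : H.sum = H.card := by
        conv_lhs => rw [hHrep]
        rw [Multiset.sum_replicate, smul_eq_mul, mul_one]
      have hGHsum : G.sum + H.sum = M.sum := by
        rw [← Multiset.sum_add, hGH]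
      have hsM' : (((bN ::ₘ F).sum : ℕ) : ℤ) = (M.sum : ℤ) + 3 * j - 1 := by
        have := sum_case1 (n := n) h0 hsum hb
        rw [hM'] at this
        exact this
      rw [hrest]
      refine Prod.ext (by omega) ?_
      simp only
      have hm' : ((((bN ::ₘ F).sum : ℕ) : ℤ) - 3 * (j - 1) - 2 - ((G.sum : ℕ) : ℤ)).toNat = H.card := by
        omega
      rw [hm', ← hHrep] at *
      rw [hGH]
  · rw [bz_case2 hC]
    rcases eq_or_ne M 0 with rfl | hM
    · simp only [Multiset.sup_zero, Multiset.card_zero, Multiset.sum_zero, Multiset.erase_zero,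
        Multiset.map_zero, Nat.bot_eq_zero, Nat.cast_zero, zero_add] at hC ⊢
      set mN := ((0 : ℤ) - 3 * j - 2 - 0).toNat with hmdef
      have hmN : (mN : ℤ) = -3 * j - 2 := by omega
      have hmN0 : mN ≠ 0 := by omega
      set R := Multiset.replicate mN 1 with hRdef
      have hsupR : R.sup = 1 :=
        msup_eq (Multiset.mem_replicate.2 ⟨hmN0, rfl⟩)
          (fun x hx => le_of_eq (Multiset.eq_of_mem_replicate hx))
      have hC'' : ((R.sup : ℤ) ≤ (R.card : ℤ) + 3 * (j + 1)) := by
        rw [hsupR, hRdef, Multiset.card_replicate]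
        omega
      rw [bz_case1 hC'']
      have hb'' : ((R.card : ℤ) + 3 * (j + 1) - 1).toNat = 0 := by
        rw [hRdef, Multiset.card_replicate]
        omega
      have : ((0 ::ₘ R.map (fun x => x - 1)).filter (fun x => x ≠ 0)) = 0 := by
        rw [Multiset.filter_eq_nil]
        intro x hx
        rcases Multiset.mem_cons.1 hx with rfl | hx
        · simp
        · rw [hRdef, Multiset.map_replicate] at hx
          have := Multiset.eq_of_mem_replicate hx
          simp [this]
      rw [hb'', this]
      refine Prod.ext (by omega) rfl
    · have ha := msup_mem hM
      have ha0 := h0 _ ha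
      have hcpos : 0 < M.card := Multiset.card_pos.2 hM
      have e1 := Multiset.sum_erase ha
      have e2 := Multiset.card_erase_of_mem ha
      rw [Nat.pred_eq_sub_one] at e2
      have e3 := sum_map_add_one (M.erase M.sup)
      push_cast at hC
      set rest := (M.erase M.sup).map (fun x => x + 1) with hrestdef
      set mN := ((M.sum : ℤ) - 3 * j - 2 - ((rest.sum : ℕ) : ℤ)).toNat with hmdef
      have hmN : (mN : ℤ) = (M.sup : ℤ) - (M.card : ℤ) - 3 * j - 1 := by omega
      set M₂ := rest + Multiset.replicate mN 1 with hM₂def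
      have hcard₂ : (M₂.card : ℤ) = (M.sup : ℤ) - 3 * j - 2 := by
        rw [hM₂def, Multiset.card_add, Multiset.card_replicate, hrestdef, Multiset.card_map]
        omega
      have hsup₂ : ∀ x ∈ M₂, x ≤ M.sup + 1 := by
        intro x hx
        rcases Multiset.mem_add.1 hx with hx | hx
        · obtain ⟨y, hy, rfl⟩ := Multiset.mem_map.1 hx
          have := Multiset.le_sup (Multiset.mem_of_mem_erase hy)
          omega
        · have := Multiset.eq_of_mem_replicate hx
          have hs1 : 1 ≤ M.sup := Nat.one_le_iff_ne_zero.2 ha0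
          omega
      have hC'' : ((M₂.sup : ℤ) ≤ (M₂.card : ℤ) + 3 * (j + 1)) := by
        have h1 : M₂.sup ≤ M.sup + 1 := Multiset.sup_le.2 hsup₂
        have h2 : (M₂.sup : ℤ) ≤ (M.sup : ℤ) + 1 := by exact_mod_cast h1
        omega
      rw [bz_case1 hC'']
      have hb'' : ((M₂.card : ℤ) + 3 * (j + 1) - 1).toNat = M.sup := by omega
      rw [hb'']
      have hmap₂ : M₂.map (fun x => x - 1) = M.erase M.sup + Multiset.replicate mN 0 := by
        rw [hM₂def, Multiset.map_add, Multiset.map_replicate, hrestdef, Multiset.map_map]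
        congr 1
        have : ∀ x ∈ M.erase M.sup, ((fun x => x - 1) ∘ (fun x => x + 1)) x = id x := by
          intro x _
          simp [Function.comp]
        rw [Multiset.map_congr rfl this, Multiset.map_id]
      rw [hmap₂]
      have hfilter : ((M.sup ::ₘ (M.erase M.sup + Multiset.replicate mN 0)).filter
          (fun x => x ≠ 0)) = M := by
        rw [Multiset.filter_cons_of_pos (p := fun x => x ≠ 0) _ ha0, Multiset.filter_add]
        rw [Multiset.filter_eq_self.2 (fun x hx => h0 x (Multiset.mem_of_mem_erase hx))]
        rw [Multiset.filter_eq_nil.2 (fun x hx => by simp [Multiset.eq_of_mem_replicate hx])]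
        rw [add_zero, Multiset.cons_erase ha]
      rw [hfilter]
      exact Prod.ext (by omega) rfl

end core2

noncomputable section assembly

def pfin (m : ℕ) : Finset (Multiset ℕ) :=
  Finset.univ.image (fun p : Nat.Partition m => p.parts)

lemma mem_pfin {m : ℕ} {M : Multiset ℕ} :
    M ∈ pfin m ↔ (∀ x ∈ M, x ≠ 0) ∧ M.sum = m := by
  constructor
  · rintro h
    simp only [pfin, Finset.mem_image, Finset.mem_univ, true_and] at h
    obtain ⟨p, rfl⟩ := h
    exact ⟨fun x hx => Nat.pos_iff_ne_zero.1 (p.parts_pos hx), p.parts_sum⟩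
  · rintro ⟨h0, hs⟩
    simp only [pfin, Finset.mem_image, Finset.mem_univ, true_and]
    exact ⟨⟨M, fun hi => Nat.pos_of_ne_zero (h0 _ hi), hs⟩, rfl⟩

lemma card_pfin (m : ℕ) : ((pfin m).card : ℤ) = partitionCount (m : ℤ) := by
  rw [partitionCount, if_pos (by positivity)]
  norm_num
  rw [pfin, Finset.card_image_of_injective _ (fun p q h => Nat.Partition.ext h)]
  simp

lemma abs_le_pent (j : ℤ) : |j| ≤ pent j := by
  have h := two_mul_pent j
  rcases abs_cases j with ⟨h1, _⟩ | ⟨h1, _⟩ <;>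
    nlinarith [sq_nonneg j, sq_nonneg (j+1), sq_nonneg (j-1)]

def pset (n : ℤ) : Finset (ℤ × Multiset ℕ) :=
  (Finset.Icc (-n) n).biUnion fun j =>
    if 0 ≤ n - pent j then (pfin (n - pent j).toNat).image (fun M => (j, M)) else ∅

lemma mem_piece {n j : ℤ} {p : ℤ × Multiset ℕ}
    (hp : p ∈ (if 0 ≤ n - pent j then (pfin (n - pent j).toNat).image (fun M => (j, M)) else ∅)) :
    p.1 = j ∧ (∀ x ∈ p.2, x ≠ 0) ∧ (p.2.sum : ℤ) + pent j = n := by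
  split_ifs at hp with h
  · obtain ⟨M, hM, rfl⟩ := Finset.mem_image.1 hp
    obtain ⟨h0, hs⟩ := mem_pfin.1 hM
    refine ⟨rfl, h0, ?_⟩
    have h2 := Int.toNat_of_nonneg h
    show (M.sum : ℤ) + pent j = n
    omega
  · simp at hp

lemma mem_pset {n : ℤ} {p : ℤ × Multiset ℕ} :
    p ∈ pset n ↔ good n p := by
  constructor
  · intro hp
    obtain ⟨j, _, hp⟩ := Finset.mem_biUnion.1 hp
    obtain ⟨h1, h2, h3⟩ := mem_piece hp
    exact ⟨h2, by rw [h1]; exact h3⟩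
  · rintro ⟨h0, hs⟩
    obtain ⟨j, M⟩ := p
    simp only at h0 hs
    apply Finset.mem_biUnion.2
    have hpos : 0 ≤ n - pent j := by omega
    have habs := abs_le_pent j
    refine ⟨j, Finset.mem_Icc.2 ⟨?_, ?_⟩, ?_⟩
    · have : (M.sum : ℤ) ≥ 0 := by positivity
      rcases abs_cases j with ⟨h1, _⟩ | ⟨h1, _⟩ <;> omega
    · have : (M.sum : ℤ) ≥ 0 := by positivity
      rcases abs_cases j with ⟨h1, _⟩ | ⟨h1, _⟩ <;> omega
    · rw [if_pos hpos]
      apply Finset.mem_image.2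
      refine ⟨M, mem_pfin.2 ⟨h0, ?_⟩, rfl⟩
      omega

lemma bz_fst (j : ℤ) (M : Multiset ℕ) : (bz (j, M)).1 = j - 1 ∨ (bz (j, M)).1 = j + 1 := by
  by_cases hC : (M.sup : ℤ) ≤ (M.card : ℤ) + 3 * j
  · left; rw [bz_case1 hC]
  · right; rw [bz_case2 hC]

lemma sgn_add_sgn {j k : ℤ} (h : k = j - 1 ∨ k = j + 1) :
    (if Even j then (1:ℤ) else -1) + (if Even k then (1:ℤ) else -1) = 0 := by
  have : ¬ (Even j ↔ Even k) := by
    rcases h with rfl | rfl <;> rcases Int.even_or_odd j with hj | hj <;>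
      simp [Int.even_sub_one, Int.even_add_one, hj] <;> omega
  by_cases hj : Even j <;> by_cases hk : Even k <;> simp [hj, hk] at this ⊢

lemma sum_pset_zero {n : ℤ} (hn : 1 ≤ n) :
    ∑ p ∈ pset n, (if Even p.1 then (1:ℤ) else -1) = 0 := by
  refine Finset.sum_involution (fun p _ => bz p) ?_ ?_ ?_ ?_
  · intro p hp
    obtain ⟨j, M⟩ := p
    exact sgn_add_sgn (bz_fst j M)
  · intro p hp _
    obtain ⟨j, M⟩ := p
    intro h
    have h' : bz (j, M) = (j, M) := h
    have h2 := bz_fst j M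
    rw [h'] at h2
    simp only [Prod.fst] at h2
    omega
  · intro p hp
    obtain ⟨j, M⟩ := p
    obtain ⟨h0, hs⟩ := mem_pset.1 hp
    exact mem_pset.2 (bz_good hn h0 hs)
  · intro p hp
    obtain ⟨j, M⟩ := p
    obtain ⟨h0, hs⟩ := mem_pset.1 hp
    exact bz_invol hn h0 hs

lemma sum_pset_eq {n : ℤ} :
    ∑ p ∈ pset n, (if Even p.1 then (1:ℤ) else -1)
      = ∑ j ∈ Finset.Icc (-n) n, (if Even j then (1:ℤ) else -1) * partitionCount (n - pent j) := by
  rw [pset, Finset.sum_biUnion]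
  · apply Finset.sum_congr rfl
    intro j _
    by_cases h : 0 ≤ n - pent j
    · rw [if_pos h, Finset.sum_image (by intro a _ b _ hab; simpa using hab)]
      dsimp only
      have hc := card_pfin (n - pent j).toNat
      rw [Int.toNat_of_nonneg h] at hc
      rw [Finset.sum_congr rfl (g := fun _ => if Even j then (1:ℤ) else -1) (fun _ _ => rfl),
        Finset.sum_const, nsmul_eq_mul, hc, mul_comm]
    · rw [if_neg h]
      have : partitionCount (n - pent j) = 0 := by rw [partitionCount, if_neg h]
      rw [this]
      simp
  · intro x hx y hy hxy
    simp only [Function.onFun]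
    rw [Finset.disjoint_left]
    intro p hpx hpy
    have h1 := (mem_piece hpx).1
    have h2 := (mem_piece hpy).1
    exact hxy (h1 ▸ h2.symm ▸ rfl)

end assembly

section final

lemma pent_neg_eq (k : ℤ) : k * (3 * k - 1) / 2 = pent (-k) := by
  have h := two_mul_pent (-k)
  have h2 : k * (3 * k - 1) = 2 * pent (-k) := by
    have h3 : (-k) * (3 * (-k) + 1) = k * (3*k-1) := by ring
    linarith
  rw [h2, Int.mul_ediv_cancel_left _ two_ne_zero]

lemma pent_pos_eq (k : ℤ) : k * (3 * k + 1) / 2 = pent k := rfl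

lemma alt_sum_zero {n : ℤ} (hn : 1 ≤ n) :
    ∑ j ∈ Finset.Icc (-n) n, (if Even j then (1:ℤ) else -1) * partitionCount (n - pent j) = 0 := by
  rw [← sum_pset_eq]; exact sum_pset_zero hn

/-- Euler's recurrence: for every positive integer `n`,
`p(n) = ∑_{k ≥ 1} (-1)^{k+1} (p(n - k(3k-1)/2) + p(n - k(3k+1)/2))`,
where `p(t) = 0` for `t < 0`.  All nonzero terms occur for `1 ≤ k ≤ n`. -/
theorem euler_recurrence (n : ℕ) (hn : 0 < n) :
    partitionCount (n : ℤ) =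
      ∑ k ∈ Finset.Icc 1 n, (-1 : ℤ) ^ (k + 1) *
        (partitionCount ((n : ℤ) - (k : ℤ) * (3 * k - 1) / 2) +
         partitionCount ((n : ℤ) - (k : ℤ) * (3 * k + 1) / 2)) := by
  set N : ℤ := (n : ℤ) with hNdef
  have hN : 1 ≤ N := by omega
  have h0 := alt_sum_zero hN
  have hsplit : Finset.Icc (-N) N = Finset.Icc (-N) (-1) ∪ Finset.Icc 0 N := by
    ext x; simp only [Finset.mem_Icc, Finset.mem_union]; omega
  have hdisj : Disjoint (Finset.Icc (-N) (-1)) (Finset.Icc (0:ℤ) N) := by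
    rw [Finset.disjoint_left]; intro a ha hb
    simp only [Finset.mem_Icc] at ha hb; omega
  rw [hsplit, Finset.sum_union hdisj] at h0
  have h00 : Finset.Icc (0:ℤ) N = insert 0 (Finset.Icc 1 N) := by
    ext x; simp only [Finset.mem_Icc, Finset.mem_insert]; omega
  rw [h00, Finset.sum_insert (by simp)] at h0
  rw [show ((if Even (0:ℤ) then (1:ℤ) else -1) * partitionCount (N - pent 0))
      = partitionCount N by simp [pent_zero]] at h0
  have hneg : ∑ j ∈ Finset.Icc (-N) (-1), (if Even j then (1:ℤ) else -1) * partitionCount (N - pent j)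
      = ∑ k ∈ Finset.Icc (1:ℤ) N, (if Even k then (1:ℤ) else -1) * partitionCount (N - pent (-k)) := by
    refine Finset.sum_bij' (fun j _ => -j) (fun k _ => -k) ?_ ?_ ?_ ?_ ?_
    · intro a ha; simp only [Finset.mem_Icc] at ha ⊢; omega
    · intro a ha; simp only [Finset.mem_Icc] at ha ⊢; omega
    · intro a _; ring
    · intro a _; ring
    · intro a _; rw [neg_neg]; simp [even_neg]
  -- transform RHS of the goal
  have hRHS : ∑ k ∈ Finset.Icc 1 n, (-1 : ℤ) ^ (k + 1) *
        (partitionCount ((n : ℤ) - (k : ℤ) * (3 * k - 1) / 2) +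
         partitionCount ((n : ℤ) - (k : ℤ) * (3 * k + 1) / 2))
      = ∑ k ∈ Finset.Icc (1:ℤ) N, (-(if Even k then (1:ℤ) else -1)) *
          (partitionCount (N - pent (-k)) + partitionCount (N - pent k)) := by
    refine Finset.sum_bij' (fun (k : ℕ) _ => (k : ℤ)) (fun (k : ℤ) _ => k.toNat) ?_ ?_ ?_ ?_ ?_
    · intro a ha; simp only [Finset.mem_Icc] at ha ⊢; omega
    · intro a ha; simp only [Finset.mem_Icc] at ha ⊢; omega
    · intro a ha; simp only [Finset.mem_Icc] at ha; show ((a:ℤ)).toNat = a; simp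
    · intro a ha; simp only [Finset.mem_Icc] at ha; show ((a.toNat : ℤ)) = a; omega
    · intro k hk
      simp only [Finset.mem_Icc] at hk
      have e1 : (k : ℤ) * (3 * (k:ℤ) - 1) / 2 = pent (-(k:ℤ)) := pent_neg_eq _
      have e2 : (k : ℤ) * (3 * (k:ℤ) + 1) / 2 = pent ((k:ℤ)) := pent_pos_eq _
      rw [e1, e2]
      have hsgn : (-1 : ℤ) ^ (k + 1) = -(if Even ((k:ℤ)) then (1:ℤ) else -1) := by
        rcases Nat.even_or_odd k with h | h
        · rw [if_pos (by exact_mod_cast h)]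
          have : Odd (k + 1) := Even.add_one h
          rw [this.neg_one_pow]
        · rw [if_neg (by simpa [Int.even_coe_nat] using (Nat.not_even_iff_odd.2 h))]
          have : Even (k + 1) := Odd.add_one h
          rw [this.neg_one_pow]
          ring
      rw [hsgn]
  rw [hRHS]
  have hexp : ∑ k ∈ Finset.Icc (1:ℤ) N, (-(if Even k then (1:ℤ) else -1)) *
          (partitionCount (N - pent (-k)) + partitionCount (N - pent k))
      = -(∑ k ∈ Finset.Icc (1:ℤ) N, (if Even k then (1:ℤ) else -1) * partitionCount (N - pent (-k)))
        + -(∑ k ∈ Finset.Icc (1:ℤ) N, (if Even k then (1:ℤ) else -1) * partitionCount (N - pent k)) := by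
    rw [← Finset.sum_neg_distrib, ← Finset.sum_neg_distrib, ← Finset.sum_add_distrib]
    apply Finset.sum_congr rfl
    intro k _
    ring
  rw [hexp, ← hneg]
  linarith [h0]

end final
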